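/- Let (α, β, γ, δ) be maps satisfying conditions (A1)–(A7) with respect to a matched pair of groups (H, K). Then {h ∈ H | α(h) = 1} ∩ {h ∈ H | γ(h) = 1} = {1} and {k ∈ K | β(k) = 1} ∩ {k ∈ K | δ(k) = 1} = {1}; that is, if α(h) = 1 and γ(h) = 1 then h = 1, and if β(k) = 1 and δ(k) = 1 then k = 1. -/

import Mathlib

/-- If maps `α, β, γ, δ` satisfy conditions (A1)–(A7) with respect to a
matched pair of groups `(H, K)`, then `ker α ∩ ker γ = {1}` and `ker β ∩ ker δ = {1}`. -/
theorem zs_kernels_intersect_trivially {H K : Type*} [Group H] [Group K]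
    (dot : K → H → H) (pow : K → H → K)
    (C1a : ∀ h : H, dot 1 h = h) (C1b : ∀ k : K, pow k 1 = k)
    (C2a : ∀ k : K, dot k 1 = 1) (C2b : ∀ h : H, pow 1 h = 1)
    (C3 : ∀ (k k' : K) (h : H), dot (k * k') h = dot k (dot k' h))
    (C4 : ∀ (k k' : K) (h : H), pow (k * k') h = pow k (dot k' h) * pow k' h)
    (C5 : ∀ (k : K) (h h' : H), dot k (h * h') = dot k h * dot (pow k h) h')
    (C6 : ∀ (k : K) (h h' : H), pow k (h * h') = pow (pow k h) h')
    (α : H → H) (β : K → H) (γ : H → K) (δ : K → K)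
    (A1 : ∀ h h' : H, α (h * h') = α h * dot (γ h) (α h'))
    (A2 : ∀ h h' : H, γ (h * h') = pow (γ h) (α h') * γ h')
    (A3 : ∀ k k' : K, β (k * k') = β k * dot (δ k) (β k'))
    (A4 : ∀ k k' : K, δ (k * k') = pow (δ k) (β k') * δ k')
    (A5 : ∀ (k : K) (h : H),
      β k * dot (δ k) (α h) = α (dot k h) * dot (γ (dot k h)) (β (pow k h)))
    (A6 : ∀ (k : K) (h : H),
      pow (δ k) (α h) * γ h = pow (γ (dot k h)) (β (pow k h)) * δ (pow k h))
    (A7 : ∀ (h' : H) (k' : K), ∃! p : H × K,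
      h' = α p.1 * dot (γ p.1) (β p.2) ∧ k' = pow (γ p.1) (β p.2) * δ p.2) :
    ({h : H | α h = 1} ∩ {h : H | γ h = 1} = {1}) ∧
    ({k : K | β k = 1} ∩ {k : K | δ k = 1} = {1}) := by
  -- dot k is injective at 1
  have dotinj : ∀ (k : K) (x : H), dot k x = 1 → x = 1 := by
    intro k x hx
    have h1 : dot (k⁻¹ * k) x = dot k⁻¹ (dot k x) := C3 k⁻¹ k x
    rw [inv_mul_cancel, C1a, hx, C2a] at h1
    exact h1
  have αone : α 1 = 1 := by
    have h1 := A1 1 1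
    rw [one_mul] at h1
    exact dotinj _ _ (left_eq_mul.mp h1)
  have γone : γ 1 = 1 := by
    have h2 := A2 1 1
    rw [one_mul] at h2
    have hp : pow (γ 1) (α 1) = 1 := right_eq_mul.mp h2
    rwa [αone, C1b] at hp
  have βone : β 1 = 1 := by
    have h1 := A3 1 1
    rw [one_mul] at h1
    exact dotinj _ _ (left_eq_mul.mp h1)
  have δone : δ 1 = 1 := by
    have h2 := A4 1 1
    rw [one_mul] at h2
    have hp : pow (δ 1) (β 1) = 1 := right_eq_mul.mp h2
    rwa [βone, C1b] at hp
  obtain ⟨p, hp, hpu⟩ := A7 1 1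
  have hone : (1, 1) = p := hpu (1, 1) (by
    constructor
    · simp only [αone, γone, βone, C1a, one_mul]
    · simp only [γone, βone, δone, C2b, one_mul])
  constructor
  · ext h
    simp only [Set.mem_inter_iff, Set.mem_setOf_eq, Set.mem_singleton_iff]
    constructor
    · rintro ⟨ha, hg⟩
      have hcand : (h, 1) = p := hpu (h, 1) (by
        constructor
        · simp only [ha, hg, βone, C1a, one_mul]
        · simp only [hg, βone, δone, C2b, one_mul])
      have := hcand.trans hone.symm
      exact (Prod.ext_iff.mp this).1
    · rintro rfl
      exact ⟨αone, γone⟩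
  · ext k
    simp only [Set.mem_inter_iff, Set.mem_setOf_eq, Set.mem_singleton_iff]
    constructor
    · rintro ⟨hb, hd⟩
      have hcand : (1, k) = p := hpu (1, k) (by
        constructor
        · simp only [αone, γone, hb, C1a, one_mul]
        · simp only [γone, hb, hd, C2b, one_mul])
      have := hcand.trans hone.symm
      exact (Prod.ext_iff.mp this).2
    · rintro rfl
      exact ⟨βone, δone⟩
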